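/- For every path-encoding instance (G, 𝒫), the relaxed optimum equals the optimal dual value: L^C = sup{ D(α) : α dual feasible }. -/

import Mathlib

open scoped Classical BigOperators

/-- A path-encoding instance: a finite directed multigraph together with a
finite nonempty set of paths. A path is a nonempty finite sequence of arcs in
which the head of each arc equals the tail of the next, and a path contains
at most one arc out of any given vertex (the tails of its arcs are distinct). -/
structure PEInstance where
  V : Type
  A : Type
  [fintypeV : Fintype V]
  [fintypeA : Fintype A]
  tail : A → V
  head : A → V
  paths : Finset (List A)
  paths_nonempty : paths.Nonempty
  paths_valid : ∀ p ∈ paths, p ≠ [] ∧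
    List.Chain' (fun a b => head a = tail b) p ∧ (p.map tail).Nodup

attribute [instance] PEInstance.fintypeV PEInstance.fintypeA

namespace PEInstance

variable (I : PEInstance)

/-- The set of arcs out of a vertex. -/
noncomputable def out (v : I.V) : Finset I.A :=
  Finset.univ.filter fun a => I.tail a = v

/-- A real length assignment: Kraft's inequality holds at every vertex. -/
def KraftR (ℓ : I.A → ℝ) : Prop :=
  ∀ v : I.V, ∑ a ∈ I.out v, (2 : ℝ) ^ (-ℓ a) ≤ 1

/-- An integer length assignment: Kraft's inequality holds at every vertex. -/
def KraftZ (ℓ : I.A → ℤ) : Prop :=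
  ∀ v : I.V, ∑ a ∈ I.out v, (2 : ℝ) ^ (-ℓ a) ≤ 1

/-- The value of a real length assignment: the largest encoded path length. -/
noncomputable def valueR (ℓ : I.A → ℝ) : ℝ :=
  I.paths.sup' I.paths_nonempty fun p => (p.map ℓ).sum

/-- The value of an integer length assignment: the largest encoded path length. -/
noncomputable def valueZ (ℓ : I.A → ℤ) : ℤ :=
  I.paths.sup' I.paths_nonempty fun p => (p.map ℓ).sum

end PEInstance

namespace PEInstance

variable (I : PEInstance)

/-- A dual feasible point: a probability distribution `α` on the path set `𝒫`. -/
def DualFeasible (α : List I.A → ℝ) : Prop :=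
  (∀ p ∈ I.paths, 0 ≤ α p) ∧ ∑ p ∈ I.paths, α p = 1

/-- `w a α = ∑_{p ∈ 𝒫 : a ∈ p} α p`, the total dual weight on the arc `a`. -/
noncomputable def w (α : List I.A → ℝ) (a : I.A) : ℝ :=
  ∑ p ∈ I.paths.filter (fun p => a ∈ p), α p

/-- `W v α = ∑_{p ∈ 𝒫ᵥ} α p`, where `𝒫ᵥ` is the set of paths containing an arc
out of the vertex `v`. -/
noncomputable def W (α : List I.A → ℝ) (v : I.V) : ℝ :=
  ∑ p ∈ I.paths.filter (fun p => ∃ a ∈ I.out v, a ∈ p), α p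

/-- The dual objective
`D α = -∑_{a ∈ A : w a > 0} (w a) · log₂ (w a / W (tail a))`. -/
noncomputable def D (α : List I.A → ℝ) : ℝ :=
  -∑ a ∈ Finset.univ.filter (fun a => 0 < I.w α a),
      I.w α a * Real.logb 2 (I.w α a / I.W α (I.tail a))

end PEInstance

namespace PEInstance

variable {I : PEInstance}


lemma mem_out {a : I.A} {v : I.V} : a ∈ I.out v ↔ I.tail a = v := by
  simp [out]

lemma self_mem_out (a : I.A) : a ∈ I.out (I.tail a) := mem_out.2 rfl

lemma kraft_nonneg {ℓ : I.A → ℝ} (h : I.KraftR ℓ) (a : I.A) : 0 ≤ ℓ a := by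
  have h1 : (2:ℝ) ^ (-ℓ a) ≤ 1 := by
    refine le_trans ?_ (h (I.tail a))
    exact Finset.single_le_sum (f := fun b => (2:ℝ) ^ (-ℓ b))
      (fun b _ => (Real.rpow_pos_of_pos two_pos _).le) (self_mem_out a)
  have := (Real.rpow_le_one_iff_of_pos two_pos).1 h1
  rcases this with h2 | h2
  · linarith [h2.2]
  · linarith [h2.1]

lemma path_nodup {p : List I.A} (hp : p ∈ I.paths) : p.Nodup :=
  (((I.paths_valid p hp).2.2).of_map _)

lemma pathsum_eq {ℓ : I.A → ℝ} {p : List I.A} (hp : p ∈ I.paths) :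
    (p.map ℓ).sum = ∑ a ∈ p.toFinset, ℓ a :=
  (List.sum_toFinset ℓ (path_nodup hp)).symm

lemma exists_kraft : ∃ ℓ : I.A → ℝ, I.KraftR ℓ := by
  obtain ⟨p, hp⟩ := I.paths_nonempty
  have hpne := (I.paths_valid p hp).1
  have hA : 0 < (Fintype.card I.A : ℝ) := by
    rcases List.exists_mem_of_ne_nil p hpne with ⟨a, _⟩
    exact_mod_cast Fintype.card_pos_iff.2 ⟨a⟩
  refine ⟨fun _ => Real.logb 2 (Fintype.card I.A), fun v => ?_⟩
  have h2 : (2:ℝ) ^ (-(Real.logb 2 (Fintype.card I.A) : ℝ))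
      = (Fintype.card I.A : ℝ)⁻¹ := by
    rw [Real.rpow_neg (by norm_num), Real.rpow_logb (by norm_num) (by norm_num) hA]
  rw [Finset.sum_const, h2, nsmul_eq_mul]
  rw [mul_inv_le_iff₀ hA, one_mul]
  exact_mod_cast Finset.card_le_univ _ |>.trans_eq (by simp)

end PEInstance

namespace PEInstance

variable {I : PEInstance}


lemma w_nonneg {α : List I.A → ℝ} (hα : I.DualFeasible α) (a : I.A) : 0 ≤ I.w α a :=
  Finset.sum_nonneg fun p hp => hα.1 p (Finset.mem_filter.1 hp).1

lemma W_nonneg {α : List I.A → ℝ} (hα : I.DualFeasible α) (v : I.V) : 0 ≤ I.W α v :=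
  Finset.sum_nonneg fun p hp => hα.1 p (Finset.mem_filter.1 hp).1

lemma w_le_W {α : List I.A → ℝ} (hα : I.DualFeasible α) (a : I.A) :
    I.w α a ≤ I.W α (I.tail a) := by
  refine Finset.sum_le_sum_of_subset_of_nonneg ?_
    (fun p hp _ => hα.1 p (Finset.mem_filter.1 hp).1)
  intro p hp
  rw [Finset.mem_filter] at hp ⊢
  exact ⟨hp.1, a, self_mem_out a, hp.2⟩

lemma w_le_one {α : List I.A → ℝ} (hα : I.DualFeasible α) (a : I.A) : I.w α a ≤ 1 := by
  rw [← hα.2]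
  exact Finset.sum_le_sum_of_subset_of_nonneg (Finset.filter_subset _ _)
    (fun p hp _ => hα.1 p hp)

/-- Each path contains at most one arc out of a given vertex; hence the total arc
weight out of `v` equals `W v`. -/
lemma sum_out_w (α : List I.A → ℝ) (v : I.V) :
    ∑ a ∈ I.out v, I.w α a = I.W α v := by
  unfold w W
  have h1 : ∀ a : I.A, ∑ p ∈ I.paths.filter (fun p => a ∈ p), α p
      = ∑ p ∈ I.paths, if a ∈ p then α p else 0 := fun a => Finset.sum_filter _ _
  simp_rw [h1]
  rw [Finset.sum_comm, Finset.sum_filter]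
  refine Finset.sum_congr rfl fun p hpmem => ?_
  have hvalid := (I.paths_valid p hpmem).2.2
  by_cases hex : ∃ a ∈ I.out v, a ∈ p
  · obtain ⟨a, hav, hap⟩ := hex
    rw [if_pos ⟨a, hav, hap⟩]
    have : ∀ b ∈ I.out v, (if b ∈ p then α p else 0) = if b = a then α p else 0 := by
      intro b hbv
      by_cases hbp : b ∈ p
      · rw [if_pos hbp, if_pos (List.inj_on_of_nodup_map hvalid hbp hap
          (by rw [mem_out.1 hbv, mem_out.1 hav]))]
      · rw [if_neg hbp, if_neg (by rintro rfl; exact hbp hap)]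
    rw [Finset.sum_congr rfl this, Finset.sum_ite_eq' (I.out v) a (fun _ => α p),
      if_pos hav]
  · rw [if_neg hex]
    refine Finset.sum_eq_zero fun b hbv => ?_
    rw [if_neg (fun hbp => hex ⟨b, hbv, hbp⟩)]

/-- Exchange of summation: `∑_a w_a ℓ_a = ∑_p α_p ⟨path sum⟩`. -/
lemma sum_w_mul (α : List I.A → ℝ) (ℓ : I.A → ℝ) :
    ∑ a : I.A, I.w α a * ℓ a = ∑ p ∈ I.paths, α p * (p.map ℓ).sum := by
  unfold w
  have : ∀ a : I.A, (∑ p ∈ I.paths.filter (fun p => a ∈ p), α p) * ℓ a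
      = ∑ p ∈ I.paths, if a ∈ p then α p * ℓ a else 0 := by
    intro a
    rw [Finset.sum_mul, Finset.sum_filter]
  simp_rw [this]
  rw [Finset.sum_comm]
  refine Finset.sum_congr rfl fun p hp => ?_
  rw [pathsum_eq hp, Finset.mul_sum]
  rw [← Finset.sum_filter]
  refine (Finset.sum_congr ?_ fun a _ => rfl)
  ext a
  simp

end PEInstance

namespace PEInstance

variable {I : PEInstance}

lemma sum_univ_w_eq (α : List I.A → ℝ) : ∑ a : I.A, I.w α a = ∑ v : I.V, I.W α v := by
  rw [← Finset.sum_fiberwise_of_maps_to (g := I.tail) (fun a _ => Finset.mem_univ (I.tail a))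
    (I.w α)]
  exact Finset.sum_congr rfl fun v _ => sum_out_w α v

lemma pathsum_le_value (ℓ : I.A → ℝ) {p : List I.A} (hp : p ∈ I.paths) :
    (p.map ℓ).sum ≤ I.valueR ℓ :=
  Finset.le_sup' (fun p => (p.map ℓ).sum) hp

lemma sum_w_mul_le_value {ℓ : I.A → ℝ} (hℓ : I.KraftR ℓ) {α : List I.A → ℝ}
    (hα : I.DualFeasible α) : ∑ a : I.A, I.w α a * ℓ a ≤ I.valueR ℓ := by
  rw [sum_w_mul]
  calc ∑ p ∈ I.paths, α p * (p.map ℓ).sum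
      ≤ ∑ p ∈ I.paths, α p * I.valueR ℓ := by
        refine Finset.sum_le_sum fun p hp => ?_
        exact mul_le_mul_of_nonneg_left (pathsum_le_value ℓ hp) (hα.1 p hp)
    _ = I.valueR ℓ := by rw [← Finset.sum_mul, hα.2, one_mul]

theorem weak_duality {ℓ : I.A → ℝ} (hℓ : I.KraftR ℓ) {α : List I.A → ℝ}
    (hα : I.DualFeasible α) : I.D α ≤ I.valueR ℓ := by
  classical
  set T := Finset.univ.filter (fun a => 0 < I.w α a) with hT
  have hlog2 : (0:ℝ) < Real.log 2 := Real.log_pos (by norm_num)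
  -- pointwise bound
  have hstep : ∀ a ∈ T, -(I.w α a * Real.logb 2 (I.w α a / I.W α (I.tail a)))
      ≤ I.w α a * ℓ a + (I.W α (I.tail a) * (2:ℝ)^(-ℓ a) - I.w α a) / Real.log 2 := by
    intro a haT
    have hw : 0 < I.w α a := (Finset.mem_filter.1 haT).2
    have hW : 0 < I.W α (I.tail a) := lt_of_lt_of_le hw (w_le_W hα a)
    have ht : (0:ℝ) < (2:ℝ)^(-ℓ a) := Real.rpow_pos_of_pos two_pos _
    have hkey : Real.logb 2 (I.W α (I.tail a) / I.w α a) - ℓ a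
        = Real.logb 2 (I.W α (I.tail a) * (2:ℝ)^(-ℓ a) / I.w α a) := by
      have h1 : Real.logb 2 ((2:ℝ)^(-ℓ a)) = -ℓ a := by
        rw [Real.logb, Real.log_rpow two_pos]
        field_simp
      have h0 : I.W α (I.tail a) * (2:ℝ)^(-ℓ a) / I.w α a
          = (I.W α (I.tail a) / I.w α a) * (2:ℝ)^(-ℓ a) := by ring
      rw [h0, Real.logb_mul (by positivity) (ne_of_gt ht), h1]
      ring
    have hneg : -(I.w α a * Real.logb 2 (I.w α a / I.W α (I.tail a)))
        = I.w α a * Real.logb 2 (I.W α (I.tail a) / I.w α a) := by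
      rw [← mul_neg, ← Real.logb_inv]
      rw [inv_div]
    rw [hneg]
    have hlb : Real.logb 2 (I.W α (I.tail a) / I.w α a)
        ≤ ℓ a + (I.W α (I.tail a) * (2:ℝ)^(-ℓ a) / I.w α a - 1) / Real.log 2 := by
      have h2 : Real.logb 2 (I.W α (I.tail a) * (2:ℝ)^(-ℓ a) / I.w α a)
          ≤ (I.W α (I.tail a) * (2:ℝ)^(-ℓ a) / I.w α a - 1) / Real.log 2 := by
        rw [Real.logb]
        gcongr
        exact Real.log_le_sub_one_of_pos (by positivity)
      linarith [hkey, h2]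
    calc I.w α a * Real.logb 2 (I.W α (I.tail a) / I.w α a)
        ≤ I.w α a * (ℓ a + (I.W α (I.tail a) * (2:ℝ)^(-ℓ a) / I.w α a - 1) / Real.log 2) :=
          mul_le_mul_of_nonneg_left hlb hw.le
      _ = I.w α a * ℓ a + (I.W α (I.tail a) * (2:ℝ)^(-ℓ a) - I.w α a) / Real.log 2 := by
          field_simp
  have hD : I.D α = ∑ a ∈ T, -(I.w α a * Real.logb 2 (I.w α a / I.W α (I.tail a))) := by
    unfold D
    rw [Finset.sum_neg_distrib]
  have h1 : I.D α ≤ ∑ a ∈ T, I.w α a * ℓ a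
      + (∑ a ∈ T, (I.W α (I.tail a) * (2:ℝ)^(-ℓ a) - I.w α a)) / Real.log 2 := by
    rw [hD, Finset.sum_div, ← Finset.sum_add_distrib]
    exact Finset.sum_le_sum hstep
  have h2 : ∑ a ∈ T, I.w α a * ℓ a ≤ I.valueR ℓ := by
    refine le_trans ?_ (sum_w_mul_le_value hℓ hα)
    exact Finset.sum_le_sum_of_subset_of_nonneg (Finset.subset_univ T)
      (fun a _ _ => mul_nonneg (w_nonneg hα a) (kraft_nonneg hℓ a))
  have hA : ∑ a ∈ T, I.w α a = ∑ a : I.A, I.w α a := by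
    refine Finset.sum_subset (Finset.subset_univ T) fun a _ haT => ?_
    have h : ¬ 0 < I.w α a := by simpa [hT] using haT
    linarith [w_nonneg hα a]
  have hC : ∑ a : I.A, I.W α (I.tail a) * (2:ℝ)^(-ℓ a) ≤ ∑ v : I.V, I.W α v := by
    rw [← Finset.sum_fiberwise_of_maps_to (g := I.tail) (fun a _ => Finset.mem_univ (I.tail a))
      (fun a => I.W α (I.tail a) * (2:ℝ)^(-ℓ a))]
    refine Finset.sum_le_sum fun v _ => ?_
    have : ∑ a ∈ Finset.univ.filter (fun a => I.tail a = v),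
        I.W α (I.tail a) * (2:ℝ)^(-ℓ a)
        = I.W α v * ∑ a ∈ I.out v, (2:ℝ)^(-ℓ a) := by
      rw [Finset.mul_sum]
      refine Finset.sum_congr rfl fun a ha => ?_
      rw [(Finset.mem_filter.1 ha).2]
    rw [this]
    calc I.W α v * ∑ a ∈ I.out v, (2:ℝ)^(-ℓ a) ≤ I.W α v * 1 :=
          mul_le_mul_of_nonneg_left (hℓ v) (W_nonneg hα v)
      _ = I.W α v := mul_one _
  have h3 : ∑ a ∈ T, (I.W α (I.tail a) * (2:ℝ)^(-ℓ a) - I.w α a) ≤ 0 := by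
    rw [Finset.sum_sub_distrib, hA, sum_univ_w_eq]
    have hB : ∑ a ∈ T, I.W α (I.tail a) * (2:ℝ)^(-ℓ a)
        ≤ ∑ a : I.A, I.W α (I.tail a) * (2:ℝ)^(-ℓ a) :=
      Finset.sum_le_sum_of_subset_of_nonneg (Finset.subset_univ T)
        (fun a _ _ => mul_nonneg (W_nonneg hα (I.tail a)) (Real.rpow_pos_of_pos two_pos _).le)
    linarith [hB, hC]
  have h4 : (∑ a ∈ T, (I.W α (I.tail a) * (2:ℝ)^(-ℓ a) - I.w α a)) / Real.log 2 ≤ 0 :=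
    div_nonpos_of_nonpos_of_nonneg h3 hlog2.le
  linarith [h1, h2, h4]

end PEInstance

namespace PEInstance

variable {I : PEInstance}

lemma card_A_pos : 0 < Fintype.card I.A := by
  obtain ⟨p, hp⟩ := I.paths_nonempty
  rcases List.exists_mem_of_ne_nil p (I.paths_valid p hp).1 with ⟨a, _⟩
  exact Fintype.card_pos_iff.2 ⟨a⟩

/-- From any dual feasible `α` one can construct a Kraft length assignment whose
`α`-average path length is at most `D α + ε`. -/
lemma exists_good_length {α : List I.A → ℝ} (hα : I.DualFeasible α) {ε : ℝ} (hε : 0 < ε) :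
    ∃ ℓ : I.A → ℝ, I.KraftR ℓ ∧ ∑ p ∈ I.paths, α p * (p.map ℓ).sum ≤ I.D α + ε := by
  classical
  set n : ℝ := (Fintype.card I.A : ℝ) with hn
  have hn1 : 1 ≤ n := by rw [hn]; exact_mod_cast card_A_pos (I := I)
  set δ : ℝ := ε / (n + 1) with hδ
  have hδpos : 0 < δ := div_pos hε (by linarith)
  set c : ℝ := 1 - (2:ℝ) ^ (-δ) with hc
  have hcpos : 0 < c := by
    have : (2:ℝ) ^ (-δ) < 1 :=
      Real.rpow_lt_one_of_one_lt_of_neg (by norm_num) (by linarith)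
    simp [hc]; linarith
  set N : ℝ := Real.logb 2 ((n + 1) / c) with hN
  have h2N : (2:ℝ) ^ (-N) = c / (n + 1) := by
    rw [Real.rpow_neg (by norm_num), hN,
      Real.rpow_logb (by norm_num) (by norm_num) (by positivity)]
    rw [inv_div]
  set ℓ : I.A → ℝ := fun a =>
    if 0 < I.w α a then δ - Real.logb 2 (I.w α a / I.W α (I.tail a)) else N with hℓdef
  have hterm : ∀ a : I.A, 0 < I.w α a →
      (2:ℝ) ^ (-ℓ a) = (2:ℝ) ^ (-δ) * (I.w α a / I.W α (I.tail a)) := by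
    intro a hw
    have hW : 0 < I.W α (I.tail a) := lt_of_lt_of_le hw (w_le_W hα a)
    have : -ℓ a = -δ + Real.logb 2 (I.w α a / I.W α (I.tail a)) := by
      rw [hℓdef]; simp only [if_pos hw]; ring
    rw [this, Real.rpow_add two_pos,
      Real.rpow_logb (by norm_num) (by norm_num) (by positivity)]
  have hkraft : I.KraftR ℓ := by
    intro v
    rw [← Finset.sum_filter_add_sum_filter_not (I.out v) (fun a => 0 < I.w α a)]
    have hpos : ∑ a ∈ (I.out v).filter (fun a => 0 < I.w α a), (2:ℝ) ^ (-ℓ a)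
        ≤ (2:ℝ) ^ (-δ) := by
      rcases Finset.eq_empty_or_nonempty ((I.out v).filter (fun a => 0 < I.w α a)) with he | hne
      · rw [he, Finset.sum_empty]; positivity
      · obtain ⟨a0, ha0⟩ := hne
        rw [Finset.mem_filter] at ha0
        have hWv : 0 < I.W α v := by
          have := lt_of_lt_of_le ha0.2 (w_le_W hα a0)
          rwa [mem_out.1 ha0.1] at this
        have : ∑ a ∈ (I.out v).filter (fun a => 0 < I.w α a), (2:ℝ) ^ (-ℓ a)
            = (2:ℝ) ^ (-δ) / I.W α v
              * ∑ a ∈ (I.out v).filter (fun a => 0 < I.w α a), I.w α a := by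
          rw [Finset.mul_sum]
          refine Finset.sum_congr rfl fun a ha => ?_
          rw [Finset.mem_filter] at ha
          rw [hterm a ha.2, mem_out.1 ha.1]
          field_simp
        rw [this]
        have hsum : ∑ a ∈ (I.out v).filter (fun a => 0 < I.w α a), I.w α a = I.W α v := by
          rw [← sum_out_w α v]
          exact Finset.sum_filter_of_ne fun a _ h => by
            rcases lt_or_eq_of_le (w_nonneg hα a) with h' | h'
            · exact h'
            · exact absurd h'.symm h
        rw [hsum]
        field_simp
        exact le_rfl
    have hzero : ∑ a ∈ (I.out v).filter (fun a => ¬ 0 < I.w α a), (2:ℝ) ^ (-ℓ a) ≤ c := by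
      have : ∀ a ∈ (I.out v).filter (fun a => ¬ 0 < I.w α a),
          (2:ℝ) ^ (-ℓ a) = c / (n + 1) := by
        intro a ha
        rw [Finset.mem_filter] at ha
        rw [hℓdef]; simp only [if_neg ha.2]
        exact h2N
      rw [Finset.sum_congr rfl this, Finset.sum_const, nsmul_eq_mul]
      have hcard : ((I.out v).filter (fun a => ¬ 0 < I.w α a)).card ≤ Fintype.card I.A :=
        Finset.card_le_univ _ |>.trans (by simp)
      calc (((I.out v).filter (fun a => ¬ 0 < I.w α a)).card : ℝ) * (c / (n + 1))
          ≤ n * (c / (n + 1)) := by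
            refine mul_le_mul_of_nonneg_right ?_ (by positivity)
            rw [hn]; exact_mod_cast hcard
        _ ≤ c := by rw [div_eq_mul_inv]; rw [← mul_assoc]; 
                    rw [mul_comm n c, mul_assoc]
                    nth_rewrite 2 [← mul_one c]
                    refine mul_le_mul_of_nonneg_left ?_ hcpos.le
                    rw [mul_inv_le_iff₀ (by linarith : (0:ℝ) < n + 1), one_mul]
                    linarith
    linarith [hpos, hzero]
  refine ⟨ℓ, hkraft, ?_⟩
  rw [← sum_w_mul]
  have hT : ∑ a : I.A, I.w α a * ℓ a
      = ∑ a ∈ Finset.univ.filter (fun a => 0 < I.w α a), I.w α a * ℓ a := by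
    symm
    refine Finset.sum_subset (Finset.subset_univ _) fun a _ haT => ?_
    have h : ¬ 0 < I.w α a := by simpa using haT
    have : I.w α a = 0 := le_antisymm (not_lt.1 h) (w_nonneg hα a)
    rw [this, zero_mul]
  rw [hT]
  have : ∑ a ∈ Finset.univ.filter (fun a => 0 < I.w α a), I.w α a * ℓ a
      = δ * (∑ a ∈ Finset.univ.filter (fun a => 0 < I.w α a), I.w α a) + I.D α := by
    unfold D
    rw [Finset.mul_sum, ← Finset.sum_neg_distrib, ← Finset.sum_add_distrib]
    refine Finset.sum_congr rfl fun a ha => ?_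
    rw [Finset.mem_filter] at ha
    rw [hℓdef]; simp only [if_pos ha.2]
    ring
  rw [this]
  have hsw : ∑ a ∈ Finset.univ.filter (fun a => 0 < I.w α a), I.w α a ≤ n := by
    calc ∑ a ∈ Finset.univ.filter (fun a => 0 < I.w α a), I.w α a
        ≤ ∑ a : I.A, I.w α a := Finset.sum_le_sum_of_subset_of_nonneg
          (Finset.subset_univ _) (fun a _ _ => w_nonneg hα a)
      _ ≤ ∑ _a : I.A, (1:ℝ) := Finset.sum_le_sum fun a _ => w_le_one hα a
      _ = n := by rw [Finset.sum_const, nsmul_eq_mul, mul_one]; simp [hn]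
  have : δ * (∑ a ∈ Finset.univ.filter (fun a => 0 < I.w α a), I.w α a) ≤ ε := by
    calc δ * (∑ a ∈ Finset.univ.filter (fun a => 0 < I.w α a), I.w α a)
        ≤ δ * n := mul_le_mul_of_nonneg_left hsw hδpos.le
      _ ≤ ε := by rw [hδ]; rw [div_mul_eq_mul_div, div_le_iff₀ (by linarith : (0:ℝ) < n+1)]
                  nlinarith
  linarith

end PEInstance

namespace PEInstance

/-- Index type for the paths of an instance. -/
abbrev PathIdx (I : PEInstance) : Type := {p : List I.A // p ∈ I.paths}

variable {I : PEInstance}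

lemma exists_dualFeasible : ∃ α : List I.A → ℝ, I.DualFeasible α := by
  classical
  have hcard : 0 < (I.paths.card : ℝ) := by
    exact_mod_cast Finset.card_pos.2 I.paths_nonempty
  refine ⟨fun p => if p ∈ I.paths then (I.paths.card : ℝ)⁻¹ else 0, fun p hp => ?_, ?_⟩
  · show (0:ℝ) ≤ if p ∈ I.paths then (I.paths.card : ℝ)⁻¹ else 0
    rw [if_pos hp]; positivity
  · show ∑ p ∈ I.paths, (if p ∈ I.paths then (I.paths.card : ℝ)⁻¹ else 0) = 1
    rw [Finset.sum_congr rfl (fun p hp => if_pos hp), Finset.sum_const, nsmul_eq_mul]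
    field_simp

lemma list_sum_nonneg {ℓ : I.A → ℝ} (hℓ : I.KraftR ℓ) (p : List I.A) :
    0 ≤ (p.map ℓ).sum :=
  List.sum_nonneg fun x hx => by
    obtain ⟨a, _, rfl⟩ := List.mem_map.1 hx
    exact kraft_nonneg hℓ a

lemma primal_nonempty : {L : ℝ | ∃ ℓ : I.A → ℝ, I.KraftR ℓ ∧ I.valueR ℓ = L}.Nonempty := by
  obtain ⟨ℓ, hℓ⟩ := exists_kraft (I := I)
  exact ⟨I.valueR ℓ, ℓ, hℓ, rfl⟩

lemma primal_bddBelow : BddBelow {L : ℝ | ∃ ℓ : I.A → ℝ, I.KraftR ℓ ∧ I.valueR ℓ = L} := by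
  refine ⟨0, fun L hL => ?_⟩
  obtain ⟨ℓ, hℓ, rfl⟩ := hL
  obtain ⟨p, hp⟩ := I.paths_nonempty
  exact le_trans (list_sum_nonneg hℓ p) (pathsum_le_value ℓ hp)

/-- The admissible region `C`: vectors dominating the path-length profile of some
Kraft length assignment. -/
def admissible (I : PEInstance) : Set (PathIdx I → ℝ) :=
  {x | ∃ ℓ : I.A → ℝ, I.KraftR ℓ ∧ ∀ p : PathIdx I, ((p : List I.A).map ℓ).sum ≤ x p}

lemma admissible_convex : Convex ℝ (admissible I) := by
  rintro x ⟨ℓx, hℓx, hx⟩ y ⟨ℓy, hℓy, hy⟩ s t hs ht hst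
  refine ⟨fun a => s * ℓx a + t * ℓy a, ?_, ?_⟩
  · intro v
    have hpt : ∀ a : I.A, (2:ℝ) ^ (-(s * ℓx a + t * ℓy a))
        ≤ s * (2:ℝ) ^ (-ℓx a) + t * (2:ℝ) ^ (-ℓy a) := by
      intro a
      have he : -(s * ℓx a + t * ℓy a) = (-ℓx a) * s + (-ℓy a) * t := by ring
      have h1 : (2:ℝ) ^ (-(s * ℓx a + t * ℓy a))
          = ((2:ℝ) ^ (-ℓx a)) ^ s * ((2:ℝ) ^ (-ℓy a)) ^ t := by
        rw [he, Real.rpow_add two_pos, Real.rpow_mul (by norm_num : (0:ℝ) ≤ 2),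
          Real.rpow_mul (by norm_num : (0:ℝ) ≤ 2)]
      rw [h1]
      exact Real.geom_mean_le_arith_mean2_weighted hs ht
        (Real.rpow_pos_of_pos two_pos _).le (Real.rpow_pos_of_pos two_pos _).le hst
    calc ∑ a ∈ I.out v, (2:ℝ) ^ (-(s * ℓx a + t * ℓy a))
        ≤ ∑ a ∈ I.out v, (s * (2:ℝ) ^ (-ℓx a) + t * (2:ℝ) ^ (-ℓy a)) :=
          Finset.sum_le_sum fun a _ => hpt a
      _ = s * (∑ a ∈ I.out v, (2:ℝ) ^ (-ℓx a)) + t * (∑ a ∈ I.out v, (2:ℝ) ^ (-ℓy a)) := by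
          rw [Finset.sum_add_distrib, Finset.mul_sum, Finset.mul_sum]
      _ ≤ s * 1 + t * 1 :=
          add_le_add (mul_le_mul_of_nonneg_left (hℓx v) hs)
            (mul_le_mul_of_nonneg_left (hℓy v) ht)
      _ = 1 := by rw [mul_one, mul_one, hst]
  · intro p
    have hsump : (((p : List I.A)).map (fun a => s * ℓx a + t * ℓy a)).sum
        = s * ((p : List I.A).map ℓx).sum + t * ((p : List I.A).map ℓy).sum := by
      rw [pathsum_eq p.2, pathsum_eq p.2, pathsum_eq p.2, Finset.mul_sum, Finset.mul_sum,
        ← Finset.sum_add_distrib]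
    rw [hsump]
    have h := add_le_add (mul_le_mul_of_nonneg_left (hx p) hs)
      (mul_le_mul_of_nonneg_left (hy p) ht)
    exact le_trans h (le_of_eq rfl)

/-- The key lower bound: for every `ε > 0` there is a dual feasible `α` whose average
path length under any Kraft assignment is at least `sInf - ε`. -/
lemma exists_dual_close {ε : ℝ} (hε : 0 < ε) :
    ∃ α : List I.A → ℝ, I.DualFeasible α ∧
      ∀ ℓ : I.A → ℝ, I.KraftR ℓ →
        sInf {L : ℝ | ∃ ℓ' : I.A → ℝ, I.KraftR ℓ' ∧ I.valueR ℓ' = L} - ε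
          ≤ ∑ p ∈ I.paths, α p * (p.map ℓ).sum := by
  classical
  set L : ℝ := sInf {L : ℝ | ∃ ℓ' : I.A → ℝ, I.KraftR ℓ' ∧ I.valueR ℓ' = L} with hL
  set x0 : PathIdx I → ℝ := fun _ => L - ε with hx0def
  have hx0 : x0 ∉ closure (admissible I) := by
    intro hmem
    have hFclosed : IsClosed {x : PathIdx I → ℝ | ∃ p : PathIdx I, L ≤ x p} := by
      have he : {x : PathIdx I → ℝ | ∃ p : PathIdx I, L ≤ x p}
          = ⋃ p : PathIdx I, {x : PathIdx I → ℝ | L ≤ x p} := by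
        ext x; simp
      rw [he]
      exact isClosed_iUnion_of_finite fun p =>
        isClosed_le continuous_const (continuous_apply p)
    have hCF : admissible I ⊆ {x : PathIdx I → ℝ | ∃ p : PathIdx I, L ≤ x p} := by
      rintro x ⟨ℓ, hℓ, hx⟩
      obtain ⟨p, hp, hsup⟩ := Finset.exists_mem_eq_sup' I.paths_nonempty
        (fun p => (p.map ℓ).sum)
      refine ⟨⟨p, hp⟩, ?_⟩
      have h1 : L ≤ I.valueR ℓ := csInf_le primal_bddBelow ⟨ℓ, hℓ, rfl⟩
      have h2 : I.valueR ℓ = (p.map ℓ).sum := hsup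
      exact le_trans (h1.trans_eq h2) (hx ⟨p, hp⟩)
    obtain ⟨p, hp⟩ := closure_minimal hCF hFclosed hmem
    simp only [hx0def] at hp
    linarith
  obtain ⟨f, u, hfx0, hfC⟩ := geometric_hahn_banach_point_closed
    admissible_convex.closure isClosed_closure hx0
  set β : PathIdx I → ℝ := fun p => f (Pi.single p 1) with hβdef
  have hrep : ∀ x : PathIdx I → ℝ, f x = ∑ p : PathIdx I, x p * β p := by
    intro x
    have hx : x = ∑ p : PathIdx I, x p • (Pi.single p 1 : PathIdx I → ℝ) := by
      funext q
      rw [Finset.sum_apply]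
      simp only [Pi.smul_apply, Pi.single_apply, smul_eq_mul, mul_ite, mul_one, mul_zero]
      rw [Finset.sum_ite_eq Finset.univ q x, if_pos (Finset.mem_univ q)]
    calc f x = f (∑ p : PathIdx I, x p • (Pi.single p 1 : PathIdx I → ℝ)) := by rw [← hx]
      _ = ∑ p : PathIdx I, x p * β p := by
        rw [map_sum]
        exact Finset.sum_congr rfl fun p _ => by rw [map_smul, smul_eq_mul]
  obtain ⟨ℓ0, hℓ0⟩ := exists_kraft (I := I)
  set xb : PathIdx I → ℝ := fun p => ((p : List I.A).map ℓ0).sum with hxb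
  have hxbC : xb ∈ admissible I := ⟨ℓ0, hℓ0, fun p => le_refl _⟩
  have hxbu : u < f xb := hfC xb (subset_closure hxbC)
  have hβ : ∀ p : PathIdx I, 0 ≤ β p := by
    intro q
    by_contra hneg
    push_neg at hneg
    have hβq : 0 < -β q := by linarith
    set t : ℝ := (f xb - u) / (-β q) + 1 with htdef
    have htpos : 0 < (f xb - u) / (-β q) := div_pos (by linarith) hβq
    have ht0 : 0 ≤ t := by rw [htdef]; linarith
    have hmemC : xb + t • (Pi.single q 1 : PathIdx I → ℝ) ∈ admissible I := by
      refine ⟨ℓ0, hℓ0, fun p => ?_⟩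
      have hnn : (0:ℝ) ≤ (t • (Pi.single q 1 : PathIdx I → ℝ)) p := by
        simp only [Pi.smul_apply, Pi.single_apply, smul_eq_mul, mul_ite, mul_one, mul_zero]
        split
        · exact ht0
        · exact le_refl 0
      have : (xb + t • (Pi.single q 1 : PathIdx I → ℝ)) p = xb p + (t • (Pi.single q 1 : PathIdx I → ℝ)) p := rfl
      rw [this]
      have hxbp : ((p : List I.A).map ℓ0).sum ≤ xb p := le_refl _
      linarith
    have hval : f (xb + t • (Pi.single q 1 : PathIdx I → ℝ)) = f xb + t * β q := by
      rw [map_add, map_smul, smul_eq_mul, hβdef]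
    have hgt : u < f xb + t * β q := by
      rw [← hval]; exact hfC _ (subset_closure hmemC)
    have htβ : t * β q = -(f xb - u) + β q := by
      rw [htdef]
      field_simp
      rw [mul_add, mul_neg, mul_div_cancel₀ (f xb - u) hneg.ne, mul_one]
    rw [htβ] at hgt
    linarith
  have hSβnn : 0 ≤ ∑ p : PathIdx I, β p := Finset.sum_nonneg fun p _ => hβ p
  have hSβpos : 0 < ∑ p : PathIdx I, β p := by
    rcases lt_or_eq_of_le hSβnn with h | h
    · exact h
    · exfalso
      have hall : ∀ p : PathIdx I, β p = 0 := by
        intro p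
        exact (Finset.sum_eq_zero_iff_of_nonneg fun q _ => hβ q).1 h.symm p (Finset.mem_univ p)
      have h1 : f x0 = 0 := by rw [hrep]; simp [hall]
      have h2 : f xb = 0 := by rw [hrep]; simp [hall]
      rw [h1] at hfx0; rw [h2] at hxbu
      linarith
  set Sβ : ℝ := ∑ p : PathIdx I, β p with hSβ
  set α : List I.A → ℝ := fun l => if h : l ∈ I.paths then β ⟨l, h⟩ / Sβ else 0 with hαdef
  have hsum_eq : ∀ g : PathIdx I → ℝ,
      ∑ l ∈ I.paths, (if h : l ∈ I.paths then g ⟨l, h⟩ else 0) = ∑ p : PathIdx I, g p := by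
    intro g
    rw [Finset.univ_eq_attach, ← Finset.sum_attach I.paths
      (fun l => if h : l ∈ I.paths then g ⟨l, h⟩ else 0)]
    exact Finset.sum_congr rfl fun p _ => by rw [dif_pos p.2]
  have hαfeas : I.DualFeasible α := by
    constructor
    · intro p hp
      show (0:ℝ) ≤ if h : p ∈ I.paths then β ⟨p, h⟩ / Sβ else 0
      rw [dif_pos hp]
      exact div_nonneg (hβ _) hSβpos.le
    · have h' : ∑ l ∈ I.paths, α l = ∑ p : PathIdx I, β p / Sβ :=
        hsum_eq (fun p => β p / Sβ)
      rw [h', ← Finset.sum_div, ← hSβ, div_self (ne_of_gt hSβpos)]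
  refine ⟨α, hαfeas, fun ℓ hℓ => ?_⟩
  set xℓ : PathIdx I → ℝ := fun p => ((p : List I.A).map ℓ).sum with hxℓ
  have hxℓC : xℓ ∈ admissible I := ⟨ℓ, hℓ, fun p => le_refl _⟩
  have h1 : u < ∑ p : PathIdx I, xℓ p * β p := by
    rw [← hrep]; exact hfC xℓ (subset_closure hxℓC)
  have h2 : f x0 = (L - ε) * Sβ := by
    rw [hrep, hSβ, Finset.mul_sum]
  have h3 : (L - ε) * Sβ < ∑ p : PathIdx I, xℓ p * β p := by
    rw [← h2]; exact lt_trans hfx0 h1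
  have h4 : ∑ l ∈ I.paths, α l * (l.map ℓ).sum = (∑ p : PathIdx I, xℓ p * β p) / Sβ := by
    have hterm : ∀ l ∈ I.paths, α l * (l.map ℓ).sum
        = (if h : l ∈ I.paths then xℓ ⟨l, h⟩ * β ⟨l, h⟩ / Sβ else 0) := by
      intro l hl
      rw [hαdef]
      show (if h : l ∈ I.paths then β ⟨l, h⟩ / Sβ else 0) * (l.map ℓ).sum = _
      rw [dif_pos hl, dif_pos hl]
      rw [hxℓ]
      ring
    rw [Finset.sum_congr rfl hterm, hsum_eq (fun p => xℓ p * β p / Sβ), ← Finset.sum_div]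
  rw [h4, le_div_iff₀ hSβpos]
  nlinarith [h3, hSβpos]

end PEInstance

/-- **strong duality.** For every path-encoding instance `(G, 𝒫)`,
the relaxed optimum equals the optimal dual value:
`L^C = sup { D α : α dual feasible }`. -/
theorem strong_duality_path_encoding (I : PEInstance) :
    sInf {L : ℝ | ∃ ℓ : I.A → ℝ, I.KraftR ℓ ∧ I.valueR ℓ = L} =
      sSup {d : ℝ | ∃ α : List I.A → ℝ, I.DualFeasible α ∧ I.D α = d} := by
  classical
  obtain ⟨α0, hα0⟩ := PEInstance.exists_dualFeasible (I := I)
  obtain ⟨ℓ0, hℓ0⟩ := PEInstance.exists_kraft (I := I)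
  have hDne : {d : ℝ | ∃ α : List I.A → ℝ, I.DualFeasible α ∧ I.D α = d}.Nonempty :=
    ⟨I.D α0, α0, hα0, rfl⟩
  have hDbdd : BddAbove {d : ℝ | ∃ α : List I.A → ℝ, I.DualFeasible α ∧ I.D α = d} := by
    refine ⟨I.valueR ℓ0, fun d hd => ?_⟩
    obtain ⟨α, hα, rfl⟩ := hd
    exact PEInstance.weak_duality hℓ0 hα
  refine le_antisymm ?_ ?_
  · -- sInf ≤ sSup
    refine le_of_forall_pos_le_add fun ε hε => ?_
    obtain ⟨α, hα, hclose⟩ := PEInstance.exists_dual_close (I := I) (half_pos hε)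
    obtain ⟨ℓ, hℓ, hgood⟩ := PEInstance.exists_good_length hα (half_pos hε)
    have h1 := hclose ℓ hℓ
    have h2 : sInf {L : ℝ | ∃ ℓ' : I.A → ℝ, I.KraftR ℓ' ∧ I.valueR ℓ' = L} - ε ≤ I.D α := by
      have := le_trans h1 hgood
      linarith
    have h3 : I.D α ≤ sSup {d : ℝ | ∃ α : List I.A → ℝ, I.DualFeasible α ∧ I.D α = d} :=
      le_csSup hDbdd ⟨α, hα, rfl⟩
    linarith
  · -- sSup ≤ sInf
    refine csSup_le hDne fun d hd => ?_
    obtain ⟨α, hα, rfl⟩ := hd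
    refine le_csInf PEInstance.primal_nonempty fun b hb => ?_
    obtain ⟨ℓ, hℓ, rfl⟩ := hb
    exact PEInstance.weak_duality hℓ hα
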